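/- Let E be a Polish space with Borel σ-algebra 𝓔 and U a compact metric space. Let P^a(x,·) be a controlled transition kernel satisfying (UE): sup over x, x' ∈ E, a, a' ∈ U, B ∈ 𝓔 of (P^a(x,B) − P^{a'}(x',B)) =: Δ < 1, and (ME): there exist an integer m ≥ 1 and K < ∞ such that (Q^u)^m(x,B) ≤ K (Q^u)^m(x',B) for every Borel measurable control u and all x, x' ∈ E, B ∈ 𝓔. Let c : E × U → ℝ be bounded, Borel measurable and continuous in its second variable. Let u_n, u : E → U be Borel measurable controls with u_n(x) → u(x) for every x ∈ E, and assume that for every x ∈ E, sup_{B ∈ 𝓔} |Q^{u_n}(x,B) − Q^{u}(x,B)| → 0 as n → ∞. Then for every α ≠ 0 and every x ∈ E, I_x^α(u_n) → I_x^α(u) as n → ∞. -/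

import Mathlib

open MeasureTheory ProbabilityTheory Filter
open scoped ENNReal

/-- Total variation distance `sup_{B ∈ 𝓔} |μ(B) − ν(B)|`. -/
noncomputable def tvDist {E : Type*} [MeasurableSpace E] (μ ν : Measure E) : ℝ :=
  ⨆ B : {B : Set E // MeasurableSet B}, |(μ B.1).toReal - (ν B.1).toReal|

/-- `k`-th iterate of a kernel. -/
noncomputable def kIter {E : Type*} [MeasurableSpace E] (Q : Kernel E E) : ℕ → Kernel E E
  | 0 => Kernel.id
  | k + 1 => (kIter Q k) ∘ₖ Q

/-- The kernel `Q^u(x,·) = P^{u(x)}(x,·)` of a Borel measurable control `u`. -/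
noncomputable def Qctrl {E U : Type*} [MeasurableSpace E] [MeasurableSpace U]
    (P : Kernel (E × U) E) (u : E → U) (hu : Measurable u) : Kernel E E :=
  P.comap (fun x => (x, u x)) (measurable_id.prodMk hu)

/-- Weighted (Feynman–Kac) operator `(S_{f,α} h)(x) = e^{α f(x)} ∫ h(y) Q(x,dy)`. -/
noncomputable def Sop {E : Type*} [MeasurableSpace E] (Q : Kernel E E)
    (f : E → ℝ) (α : ℝ) (h : E → ℝ) : E → ℝ :=
  fun x => Real.exp (α * f x) * ∫ y, h y ∂ (Q x)

/-- Long run risk-sensitive functional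
`I_x^α = liminf_n (1/n) ln E_x[e^{α Σ_{i<n} f(X_i)}]`. -/
noncomputable def IRS {E : Type*} [MeasurableSpace E] (Q : Kernel E E)
    (f : E → ℝ) (α : ℝ) (x : E) : ℝ :=
  Filter.liminf (fun n : ℕ =>
    (1 / (n : ℝ)) * Real.log ((Sop Q f α)^[n] (fun _ => 1) x)) atTop

section aux
variable {E : Type*} [MeasurableSpace E]

lemma integrable_of_bdd {μ : Measure E} [IsFiniteMeasure μ] {g : E → ℝ} (hg : Measurable g)
    {R : ℝ} (hb : ∀ x, |g x| ≤ R) : Integrable g μ :=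
  (integrable_const R).mono' hg.aestronglyMeasurable
    (Eventually.of_forall (by simpa [Real.norm_eq_abs] using hb))

lemma abs_measure_sub_le_tvDist (μ ν : Measure E) [IsProbabilityMeasure μ]
    [IsProbabilityMeasure ν] {B : Set E} (hB : MeasurableSet B) :
    |(μ B).toReal - (ν B).toReal| ≤ tvDist μ ν := by
  have hbdd : BddAbove (Set.range fun B : {B : Set E // MeasurableSet B} =>
      |(μ B.1).toReal - (ν B.1).toReal|) := by
    refine ⟨1, ?_⟩
    rintro r ⟨A, rfl⟩
    have h1 : (μ A.1).toReal ≤ 1 := by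
      have := prob_le_one (μ := μ) (s := A.1)
      calc (μ A.1).toReal ≤ (1 : ℝ≥0∞).toReal := ENNReal.toReal_mono (by simp) this
      _ = 1 := by simp
    have h2 : (ν A.1).toReal ≤ 1 := by
      have := prob_le_one (μ := ν) (s := A.1)
      calc (ν A.1).toReal ≤ (1 : ℝ≥0∞).toReal := ENNReal.toReal_mono (by simp) this
      _ = 1 := by simp
    have h3 : 0 ≤ (μ A.1).toReal := ENNReal.toReal_nonneg
    have h4 : 0 ≤ (ν A.1).toReal := ENNReal.toReal_nonneg
    rw [abs_le]; constructor <;> linarith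
  exact le_ciSup hbdd (⟨B, hB⟩ : {B : Set E // MeasurableSet B})

lemma tvDist_nonneg (μ ν : Measure E) [IsProbabilityMeasure μ] [IsProbabilityMeasure ν] :
    0 ≤ tvDist μ ν := by
  have := abs_measure_sub_le_tvDist μ ν MeasurableSet.empty
  simpa using le_trans (abs_nonneg _) this

end aux


section aux
variable {E : Type*} [MeasurableSpace E]

-- one-sided lintegral comparison for the layer-cake argument
lemma lint_layer_le (μ ν : Measure E) [IsProbabilityMeasure μ] [IsProbabilityMeasure ν]
    {g : E → ℝ} (hg : Measurable g) {R D : ℝ} (hR : 0 < R) (hD : 0 ≤ D)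
    (hgl : ∀ x, 0 ≤ g x) (hgu : ∀ x, g x ≤ R)
    (hDle : ∀ B : Set E, MeasurableSet B → (μ B).toReal ≤ (ν B).toReal + D) :
    ∫⁻ x, ENNReal.ofReal (g x) ∂μ ≤ (∫⁻ x, ENNReal.ofReal (g x) ∂ν) + ENNReal.ofReal (R * D) := by
  rw [lintegral_eq_lintegral_meas_lt μ (Eventually.of_forall hgl) hg.aemeasurable,
      lintegral_eq_lintegral_meas_lt ν (Eventually.of_forall hgl) hg.aemeasurable]
  have hsplit : Set.Ioi (0:ℝ) = Set.Ioc 0 R ∪ Set.Ioi R := (Set.Ioc_union_Ioi_eq_Ioi hR.le).symm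
  have hmeasA : ∀ t : ℝ, MeasurableSet {a : E | t < g a} := fun t =>
    measurableSet_lt measurable_const hg
  have hzero : ∫⁻ t in Set.Ioi R, μ {a : E | t < g a} = 0 := by
    have : ∀ t ∈ Set.Ioi R, μ {a : E | t < g a} = 0 := by
      intro t ht
      have : {a : E | t < g a} = ∅ := by
        ext a; simp only [Set.mem_setOf_eq, Set.mem_empty_iff_false, iff_false, not_lt]
        exact le_trans (hgu a) (le_of_lt ht)
      simp [this]
    calc ∫⁻ t in Set.Ioi R, μ {a : E | t < g a}
        = ∫⁻ _ in Set.Ioi R, (0:ℝ≥0∞) := setLIntegral_congr_fun measurableSet_Ioi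
          (fun t ht => this t ht)
      _ = 0 := lintegral_zero
  have key : ∫⁻ t in Set.Ioi (0:ℝ), μ {a : E | t < g a}
      = ∫⁻ t in Set.Ioc (0:ℝ) R, μ {a : E | t < g a} := by
    rw [hsplit, lintegral_union measurableSet_Ioi (Set.Ioc_disjoint_Ioi le_rfl), hzero, add_zero]
  rw [key]
  have hptwise : ∀ t : ℝ, μ {a : E | t < g a} ≤ ν {a : E | t < g a} + ENNReal.ofReal D := by
    intro t
    have h1 := hDle _ (hmeasA t)
    have hfin : μ {a : E | t < g a} ≠ ⊤ := measure_ne_top μ _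
    have hfin' : ν {a : E | t < g a} ≠ ⊤ := measure_ne_top ν _
    calc μ {a : E | t < g a} = ENNReal.ofReal (μ {a : E | t < g a}).toReal := by
          rw [ENNReal.ofReal_toReal hfin]
      _ ≤ ENNReal.ofReal ((ν {a : E | t < g a}).toReal + D) := ENNReal.ofReal_le_ofReal h1
      _ ≤ ENNReal.ofReal (ν {a : E | t < g a}).toReal + ENNReal.ofReal D :=
          ENNReal.ofReal_add_le
      _ = ν {a : E | t < g a} + ENNReal.ofReal D := by rw [ENNReal.ofReal_toReal hfin']
  calc ∫⁻ t in Set.Ioc (0:ℝ) R, μ {a : E | t < g a}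
      ≤ ∫⁻ t in Set.Ioc (0:ℝ) R, (ν {a : E | t < g a} + ENNReal.ofReal D) :=
        lintegral_mono fun t => hptwise t
    _ = (∫⁻ t in Set.Ioc (0:ℝ) R, ν {a : E | t < g a}) + ENNReal.ofReal D * volume (Set.Ioc (0:ℝ) R) := by
        rw [lintegral_add_right _ measurable_const]
        congr 1
        rw [setLIntegral_const]
    _ ≤ (∫⁻ t in Set.Ioi (0:ℝ), ν {a : E | t < g a}) + ENNReal.ofReal (R * D) := by
        gcongr
        · exact Set.Ioc_subset_Ioi_self
        · rw [Real.volume_Ioc, sub_zero, ← ENNReal.ofReal_mul hD, mul_comm]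

end aux

section aux2
variable {E : Type*} [MeasurableSpace E]

lemma abs_integral_sub_le_tv (μ ν : Measure E) [IsProbabilityMeasure μ] [IsProbabilityMeasure ν]
    {g : E → ℝ} (hg : Measurable g) {R D : ℝ} (hR : 0 < R) (hb : ∀ x, |g x| ≤ R)
    (hD : 0 ≤ D) (hDle : ∀ B : Set E, MeasurableSet B → |(μ B).toReal - (ν B).toReal| ≤ D) :
    |∫ x, g x ∂μ - ∫ x, g x ∂ν| ≤ 2 * R * D := by
  set g' : E → ℝ := fun x => g x + R with hg'
  have hg'm : Measurable g' := hg.add_const R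
  have hg'l : ∀ x, 0 ≤ g' x := fun x => by
    have := (abs_le.mp (hb x)).1; simp only [hg']; linarith
  have hg'u : ∀ x, g' x ≤ 2 * R := fun x => by
    have := (abs_le.mp (hb x)).2; simp only [hg']; linarith
  have h2R : (0:ℝ) < 2 * R := by linarith
  have hfinμ : ∫⁻ x, ENNReal.ofReal (g' x) ∂μ ≠ ⊤ := by
    have : ∫⁻ x, ENNReal.ofReal (g' x) ∂μ ≤ ∫⁻ _, ENNReal.ofReal (2*R) ∂μ :=
      lintegral_mono fun x => ENNReal.ofReal_le_ofReal (hg'u x)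
    refine ne_top_of_le_ne_top ?_ this
    simp [lintegral_const]
    exact ENNReal.mul_ne_top (by norm_num) ENNReal.ofReal_ne_top
  have hfinν : ∫⁻ x, ENNReal.ofReal (g' x) ∂ν ≠ ⊤ := by
    have : ∫⁻ x, ENNReal.ofReal (g' x) ∂ν ≤ ∫⁻ _, ENNReal.ofReal (2*R) ∂ν :=
      lintegral_mono fun x => ENNReal.ofReal_le_ofReal (hg'u x)
    refine ne_top_of_le_ne_top ?_ this
    simp [lintegral_const]
    exact ENNReal.mul_ne_top (by norm_num) ENNReal.ofReal_ne_top
  have h1 : ∫⁻ x, ENNReal.ofReal (g' x) ∂μ ≤ (∫⁻ x, ENNReal.ofReal (g' x) ∂ν)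
      + ENNReal.ofReal (2 * R * D) :=
    lint_layer_le μ ν hg'm h2R hD hg'l hg'u
      (fun B hB => by have := (abs_le.mp (hDle B hB)).2; linarith)
  have h2 : ∫⁻ x, ENNReal.ofReal (g' x) ∂ν ≤ (∫⁻ x, ENNReal.ofReal (g' x) ∂μ)
      + ENNReal.ofReal (2 * R * D) :=
    lint_layer_le ν μ hg'm h2R hD hg'l hg'u
      (fun B hB => by have := (abs_le.mp (hDle B hB)).1; linarith)
  have hμint : ∫ x, g' x ∂μ = (∫⁻ x, ENNReal.ofReal (g' x) ∂μ).toReal :=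
    integral_eq_lintegral_of_nonneg_ae (Eventually.of_forall hg'l) hg'm.aestronglyMeasurable
  have hνint : ∫ x, g' x ∂ν = (∫⁻ x, ENNReal.ofReal (g' x) ∂ν).toReal :=
    integral_eq_lintegral_of_nonneg_ae (Eventually.of_forall hg'l) hg'm.aestronglyMeasurable
  have hgint : Integrable g μ := integrable_of_bdd hg hb
  have hgint' : Integrable g ν := integrable_of_bdd hg hb
  have hμ' : ∫ x, g' x ∂μ = (∫ x, g x ∂μ) + R := by
    simp only [hg']
    rw [integral_add hgint (integrable_const R)]
    simp
  have hν' : ∫ x, g' x ∂ν = (∫ x, g x ∂ν) + R := by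
    simp only [hg']
    rw [integral_add hgint' (integrable_const R)]
    simp
  have hRD : (0:ℝ) ≤ 2 * R * D := by positivity
  have hle1 : (∫⁻ x, ENNReal.ofReal (g' x) ∂μ).toReal
      ≤ (∫⁻ x, ENNReal.ofReal (g' x) ∂ν).toReal + 2 * R * D := by
    have := ENNReal.toReal_mono (by
      exact ENNReal.add_ne_top.mpr ⟨hfinν, ENNReal.ofReal_ne_top⟩) h1
    rwa [ENNReal.toReal_add hfinν ENNReal.ofReal_ne_top, ENNReal.toReal_ofReal hRD] at this
  have hle2 : (∫⁻ x, ENNReal.ofReal (g' x) ∂ν).toReal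
      ≤ (∫⁻ x, ENNReal.ofReal (g' x) ∂μ).toReal + 2 * R * D := by
    have := ENNReal.toReal_mono (by
      exact ENNReal.add_ne_top.mpr ⟨hfinμ, ENNReal.ofReal_ne_top⟩) h2
    rwa [ENNReal.toReal_add hfinμ ENNReal.ofReal_ne_top, ENNReal.toReal_ofReal hRD] at this
  have : ∫ x, g x ∂μ - ∫ x, g x ∂ν
      = (∫⁻ x, ENNReal.ofReal (g' x) ∂μ).toReal - (∫⁻ x, ENNReal.ofReal (g' x) ∂ν).toReal := by
    rw [← hμint, ← hνint, hμ', hν']; ring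
  rw [this, abs_le]
  constructor <;> linarith

end aux2

section iter
variable {E : Type*} [MeasurableSpace E] (Q : Kernel E E) [IsMarkovKernel Q]
  {f : E → ℝ} (hf : Measurable f) {α B : ℝ} (hB : ∀ x, |α * f x| ≤ B)

include hf in
lemma sop_meas {g : E → ℝ} (hg : Measurable g) : Measurable (Sop Q f α g) := by
  have meas1 : Measurable fun x => Real.exp (α * f x) :=
    Real.measurable_exp.comp (hf.const_mul α)
  have meas2 : Measurable fun x => ∫ y, g y ∂ Q x :=
    (StronglyMeasurable.integral_kernel_prod_right' (κ := Q)
      (f := fun p : E × E => g p.2) ((hg.comp measurable_snd).stronglyMeasurable)).measurable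
  exact meas1.mul meas2

include hf hB in
lemma sop_iter_meas_bounds {h : E → ℝ} (hh : Measurable h) {r R : ℝ} (hr : 0 ≤ r)
    (hhr : ∀ x, r ≤ h x) (hhR : ∀ x, h x ≤ R) : ∀ p : ℕ,
    Measurable ((Sop Q f α)^[p] h) ∧
    ∀ x, Real.exp (-((p:ℝ)*B)) * r ≤ (Sop Q f α)^[p] h x ∧
      (Sop Q f α)^[p] h x ≤ Real.exp ((p:ℝ)*B) * R := by
  intro p
  induction p with
  | zero => simpa using ⟨hh, fun x => ⟨hhr x, hhR x⟩⟩
  | succ p ih =>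
    obtain ⟨hgm, hgb⟩ := ih
    rw [Function.iterate_succ_apply']
    refine ⟨sop_meas Q hf hgm, fun x => ?_⟩
    set g := (Sop Q f α)^[p] h with hgdef
    have hR0 : 0 ≤ R := le_trans hr (le_trans (hhr x) (hhR x))
    have gint : Integrable g (Q x) := by
      refine integrable_of_bdd hgm (R := Real.exp ((p:ℝ)*B) * R) fun y => abs_le.mpr ⟨?_, (hgb y).2⟩
      have h0 : (0:ℝ) ≤ g y := le_trans (mul_nonneg (Real.exp_nonneg _) hr) (hgb y).1
      have : (0:ℝ) ≤ Real.exp ((p:ℝ)*B) * R := mul_nonneg (Real.exp_nonneg _) hR0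
      linarith
    have I1 : Real.exp (-((p:ℝ)*B)) * r ≤ ∫ y, g y ∂ Q x := by
      have := integral_mono (integrable_const (Real.exp (-((p:ℝ)*B)) * r)) gint
        (fun y => (hgb y).1)
      simpa using this
    have I2 : ∫ y, g y ∂ Q x ≤ Real.exp ((p:ℝ)*B) * R := by
      have := integral_mono gint (integrable_const (Real.exp ((p:ℝ)*B) * R))
        (fun y => (hgb y).2)
      simpa using this
    have e1 : Real.exp (-B) ≤ Real.exp (α * f x) := Real.exp_le_exp.mpr (neg_le_of_abs_le (hB x))
    have e2 : Real.exp (α * f x) ≤ Real.exp B := Real.exp_le_exp.mpr (le_of_abs_le (hB x))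
    have hc1 : Real.exp (-(((p:ℝ)+1)*B)) = Real.exp (-B) * Real.exp (-((p:ℝ)*B)) := by
      rw [← Real.exp_add]; ring_nf
    have hc2 : Real.exp (((p:ℝ)+1)*B) = Real.exp B * Real.exp ((p:ℝ)*B) := by
      rw [← Real.exp_add]; ring_nf
    constructor
    · calc Real.exp (-((↑(p+1):ℝ)*B)) * r
          = Real.exp (-B) * (Real.exp (-((p:ℝ)*B)) * r) := by push_cast; rw [hc1]; ring
        _ ≤ Real.exp (α * f x) * ∫ y, g y ∂ Q x :=
            mul_le_mul e1 I1 (mul_nonneg (Real.exp_nonneg _) hr) (Real.exp_nonneg _)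
        _ = Sop Q f α g x := rfl
    · calc Sop Q f α g x = Real.exp (α * f x) * ∫ y, g y ∂ Q x := rfl
        _ ≤ Real.exp B * (Real.exp ((p:ℝ)*B) * R) :=
            mul_le_mul e2 I2 (le_trans (mul_nonneg (Real.exp_nonneg _) hr) I1) (Real.exp_nonneg _)
        _ = Real.exp ((↑(p+1):ℝ)*B) * R := by push_cast; rw [hc2]; ring

end iter

section iter2
variable {E : Type*} [MeasurableSpace E] (Q : Kernel E E) [IsMarkovKernel Q]
  {f : E → ℝ} (hf : Measurable f) {α B : ℝ} (hB : ∀ x, |α * f x| ≤ B)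

include hf hB in
lemma sop_iter_mono {h₁ h₂ : E → ℝ} (hm1 : Measurable h₁) (hm2 : Measurable h₂)
    {R₁ R₂ : ℝ} (h1l : ∀ x, 0 ≤ h₁ x) (h1u : ∀ x, h₁ x ≤ R₁)
    (h2l : ∀ x, 0 ≤ h₂ x) (h2u : ∀ x, h₂ x ≤ R₂)
    (hle : ∀ x, h₁ x ≤ h₂ x) : ∀ p x, (Sop Q f α)^[p] h₁ x ≤ (Sop Q f α)^[p] h₂ x := by
  intro p
  induction p with
  | zero => simpa using hle
  | succ p ih =>
    intro x
    rw [Function.iterate_succ_apply', Function.iterate_succ_apply']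
    obtain ⟨hg1m, hg1b⟩ := sop_iter_meas_bounds Q hf hB hm1 le_rfl h1l h1u p
    obtain ⟨hg2m, hg2b⟩ := sop_iter_meas_bounds Q hf hB hm2 le_rfl h2l h2u p
    have gint1 : Integrable ((Sop Q f α)^[p] h₁) (Q x) := by
      refine integrable_of_bdd hg1m (R := Real.exp ((p:ℝ)*B) * R₁) fun y => abs_le.mpr
        ⟨?_, (hg1b y).2⟩
      have h0 : (0:ℝ) ≤ (Sop Q f α)^[p] h₁ y := by simpa using (hg1b y).1
      have : (0:ℝ) ≤ Real.exp ((p:ℝ)*B) * R₁ := le_trans h0 (hg1b y).2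
      linarith
    have gint2 : Integrable ((Sop Q f α)^[p] h₂) (Q x) := by
      refine integrable_of_bdd hg2m (R := Real.exp ((p:ℝ)*B) * R₂) fun y => abs_le.mpr
        ⟨?_, (hg2b y).2⟩
      have h0 : (0:ℝ) ≤ (Sop Q f α)^[p] h₂ y := by simpa using (hg2b y).1
      have : (0:ℝ) ≤ Real.exp ((p:ℝ)*B) * R₂ := le_trans h0 (hg2b y).2
      linarith
    exact mul_le_mul_of_nonneg_left (integral_mono gint1 gint2 ih) (Real.exp_nonneg _)

lemma sop_iter_const_mul (s : ℝ) (h : E → ℝ) :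
    ∀ p, (Sop Q f α)^[p] (fun y => s * h y) = fun x => s * (Sop Q f α)^[p] h x := by
  intro p
  induction p with
  | zero => rfl
  | succ p ih =>
    rw [Function.iterate_succ_apply', Function.iterate_succ_apply', ih]
    funext x
    simp only [Sop]
    rw [MeasureTheory.integral_const_mul]
    ring

end iter2

section kit
variable {E : Type*} [MeasurableSpace E] (Q : Kernel E E) [IsMarkovKernel Q]

lemma kIter_markov : ∀ p, IsMarkovKernel (kIter Q p) := by
  intro p
  induction p with
  | zero => rw [kIter]; infer_instance
  | succ p ih => rw [kIter]; exact Kernel.IsMarkovKernel.comp _ _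

/-- `φ p h x = ∫ h d (Q^p)(x,·)` via lintegral. -/
noncomputable def phiI (Q : Kernel E E) (h : E → ℝ) (p : ℕ) (x : E) : ℝ :=
  (∫⁻ y, ENNReal.ofReal (h y) ∂ (kIter Q p x)).toReal

lemma phiI_lint_le {h : E → ℝ} {R : ℝ} (hhR : ∀ x, h x ≤ R) (hR : 0 ≤ R) (p : ℕ) (x : E) :
    ∫⁻ y, ENNReal.ofReal (h y) ∂ (kIter Q p x) ≤ ENNReal.ofReal R := by
  haveI := kIter_markov Q p
  calc ∫⁻ y, ENNReal.ofReal (h y) ∂ (kIter Q p x)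
      ≤ ∫⁻ _, ENNReal.ofReal R ∂ (kIter Q p x) :=
        lintegral_mono fun y => ENNReal.ofReal_le_ofReal (hhR y)
    _ = ENNReal.ofReal R := by simp

lemma phiI_meas {h : E → ℝ} (hh : Measurable h) (p : ℕ) : Measurable (phiI Q h p) := by
  haveI := kIter_markov Q p
  exact (Measurable.lintegral_kernel_prod_right' (κ := kIter Q p)
    (f := fun q : E × E => ENNReal.ofReal (h q.2))
    ((ENNReal.measurable_ofReal.comp (hh.comp measurable_snd)))).ennreal_toReal

lemma phiI_nonneg (h : E → ℝ) (p : ℕ) (x : E) : 0 ≤ phiI Q h p x := ENNReal.toReal_nonneg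

lemma phiI_le {h : E → ℝ} {R : ℝ} (hhR : ∀ x, h x ≤ R) (hR : 0 ≤ R) (p : ℕ) (x : E) :
    phiI Q h p x ≤ R := by
  have := phiI_lint_le Q hhR hR p x
  have h2 := ENNReal.toReal_mono ENNReal.ofReal_ne_top this
  rwa [ENNReal.toReal_ofReal hR] at h2

lemma phiI_zero {h : E → ℝ} (hh : Measurable h) (hl : ∀ x, 0 ≤ h x) (x : E) :
    phiI Q h 0 x = h x := by
  simp only [phiI, kIter, Kernel.id_apply]
  rw [lintegral_dirac' _ hh.ennreal_ofReal]
  exact ENNReal.toReal_ofReal (hl x)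

lemma phiI_succ {h : E → ℝ} (hh : Measurable h) {R : ℝ} (hhR : ∀ x, h x ≤ R) (hR : 0 ≤ R)
    (p : ℕ) (x : E) : phiI Q h (p+1) x = ∫ y, phiI Q h p y ∂ Q x := by
  haveI := kIter_markov Q p
  have hLmeas : Measurable fun y => ∫⁻ z, ENNReal.ofReal (h z) ∂ (kIter Q p y) :=
    Measurable.lintegral_kernel_prod_right' (κ := kIter Q p)
      (f := fun q : E × E => ENNReal.ofReal (h q.2))
      (ENNReal.measurable_ofReal.comp (hh.comp measurable_snd))
  have key : ∫ y, phiI Q h p y ∂ Q x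
      = (∫⁻ y, (∫⁻ z, ENNReal.ofReal (h z) ∂ (kIter Q p y)) ∂ Q x).toReal := by
    refine integral_toReal hLmeas.aemeasurable ?_
    exact Eventually.of_forall fun y =>
      lt_of_le_of_lt (phiI_lint_le Q hhR hR p y) ENNReal.ofReal_lt_top
  rw [key]
  congr 1
  simp only [phiI, kIter]
  rw [Kernel.lintegral_comp _ _ _ hh.ennreal_ofReal]

end kit

section sandwich
variable {E : Type*} [MeasurableSpace E] (Q : Kernel E E) [IsMarkovKernel Q]
  {f : E → ℝ} (hf : Measurable f) {α B : ℝ} (hB : ∀ x, |α * f x| ≤ B)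

include hf hB in
lemma sop_iter_sandwich {h : E → ℝ} (hh : Measurable h) {R : ℝ}
    (hl : ∀ x, 0 ≤ h x) (hu : ∀ x, h x ≤ R) (hR : 0 ≤ R) : ∀ (p : ℕ) (x : E),
    Real.exp (-((p:ℝ)*B)) * phiI Q h p x ≤ (Sop Q f α)^[p] h x ∧
    (Sop Q f α)^[p] h x ≤ Real.exp ((p:ℝ)*B) * phiI Q h p x := by
  intro p
  induction p with
  | zero =>
    intro x
    rw [phiI_zero Q hh hl x]
    simp
  | succ p ih =>
    intro x
    rw [Function.iterate_succ_apply']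
    obtain ⟨hgm, hgb⟩ := sop_iter_meas_bounds Q hf hB hh le_rfl hl hu p
    set g := (Sop Q f α)^[p] h with hgdef
    have hphim : Measurable (phiI Q h p) := phiI_meas Q hh p
    have hphil : ∀ y, 0 ≤ phiI Q h p y := phiI_nonneg Q h p
    have hphiu : ∀ y, phiI Q h p y ≤ R := phiI_le Q hu hR p
    have gint : Integrable g (Q x) := by
      refine integrable_of_bdd hgm (R := Real.exp ((p:ℝ)*B) * R) fun y => abs_le.mpr ⟨?_, (hgb y).2⟩
      have h0 : (0:ℝ) ≤ g y := le_trans (by simp) (hgb y).1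
      have : (0:ℝ) ≤ Real.exp ((p:ℝ)*B) * R := mul_nonneg (Real.exp_nonneg _) hR
      linarith
    have pint1 : Integrable (fun y => Real.exp (-((p:ℝ)*B)) * phiI Q h p y) (Q x) :=
      (integrable_of_bdd hphim (R := R) fun y =>
        abs_le.mpr ⟨by linarith [hphil y], hphiu y⟩).const_mul _
    have pint2 : Integrable (fun y => Real.exp ((p:ℝ)*B) * phiI Q h p y) (Q x) :=
      (integrable_of_bdd hphim (R := R) fun y =>
        abs_le.mpr ⟨by linarith [hphil y], hphiu y⟩).const_mul _
    have hsucc : phiI Q h (p+1) x = ∫ y, phiI Q h p y ∂ Q x := phiI_succ Q hh hu hR p x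
    have I1 : Real.exp (-((p:ℝ)*B)) * phiI Q h (p+1) x ≤ ∫ y, g y ∂ Q x := by
      rw [hsucc, ← MeasureTheory.integral_const_mul]
      exact integral_mono pint1 gint fun y => (ih y).1
    have I2 : ∫ y, g y ∂ Q x ≤ Real.exp ((p:ℝ)*B) * phiI Q h (p+1) x := by
      rw [hsucc, ← MeasureTheory.integral_const_mul]
      exact integral_mono gint pint2 fun y => (ih y).2
    have e1 : Real.exp (-B) ≤ Real.exp (α * f x) := Real.exp_le_exp.mpr (neg_le_of_abs_le (hB x))
    have e2 : Real.exp (α * f x) ≤ Real.exp B := Real.exp_le_exp.mpr (le_of_abs_le (hB x))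
    have hc1 : Real.exp (-(((p:ℝ)+1)*B)) = Real.exp (-B) * Real.exp (-((p:ℝ)*B)) := by
      rw [← Real.exp_add]; ring_nf
    have hc2 : Real.exp (((p:ℝ)+1)*B) = Real.exp B * Real.exp ((p:ℝ)*B) := by
      rw [← Real.exp_add]; ring_nf
    have hI0 : (0:ℝ) ≤ ∫ y, g y ∂ Q x :=
      le_trans (mul_nonneg (Real.exp_nonneg _) ENNReal.toReal_nonneg) I1
    constructor
    · calc Real.exp (-((↑(p+1):ℝ)*B)) * phiI Q h (p+1) x
          = Real.exp (-B) * (Real.exp (-((p:ℝ)*B)) * phiI Q h (p+1) x) := by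
            push_cast; rw [hc1]; ring
        _ ≤ Real.exp (α * f x) * ∫ y, g y ∂ Q x :=
            mul_le_mul e1 I1 (mul_nonneg (Real.exp_nonneg _) ENNReal.toReal_nonneg)
              (Real.exp_nonneg _)
        _ = Sop Q f α g x := rfl
    · calc Sop Q f α g x = Real.exp (α * f x) * ∫ y, g y ∂ Q x := rfl
        _ ≤ Real.exp B * (Real.exp ((p:ℝ)*B) * phiI Q h (p+1) x) := mul_le_mul e2 I2 hI0
            (Real.exp_nonneg _)
        _ = Real.exp ((↑(p+1):ℝ)*B) * phiI Q h (p+1) x := by push_cast; rw [hc2]; ring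

end sandwich

section key
variable {E : Type*} [MeasurableSpace E] (Q : Kernel E E) [IsMarkovKernel Q]
  {f : E → ℝ} (hf : Measurable f) {α B : ℝ} (hB : ∀ x, |α * f x| ≤ B) (hB0 : 0 ≤ B)
  {m : ℕ} (hm : 1 ≤ m) {K : ℝ} (hK1 : 1 ≤ K)
  (hME : ∀ x x' : E, ∀ Bs : Set E, MeasurableSet Bs →
    kIter Q m x Bs ≤ ENNReal.ofReal K * kIter Q m x' Bs)

include hK1 hME in
lemma phiI_ME {h : E → ℝ} (hh : Measurable h) {R : ℝ} (hhR : ∀ x, h x ≤ R) (hR : 0 ≤ R)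
    (x x' : E) : phiI Q h m x ≤ K * phiI Q h m x' := by
  have hle : kIter Q m x ≤ ENNReal.ofReal K • kIter Q m x' := by
    refine Measure.le_iff.mpr fun s hs => ?_
    simpa [Measure.smul_apply, smul_eq_mul] using hME x x' s hs
  have h1 : ∫⁻ y, ENNReal.ofReal (h y) ∂ (kIter Q m x)
      ≤ ENNReal.ofReal K * ∫⁻ y, ENNReal.ofReal (h y) ∂ (kIter Q m x') := by
    calc ∫⁻ y, ENNReal.ofReal (h y) ∂ (kIter Q m x)
        ≤ ∫⁻ y, ENNReal.ofReal (h y) ∂ (ENNReal.ofReal K • kIter Q m x') :=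
          lintegral_mono' hle le_rfl
      _ = ENNReal.ofReal K * ∫⁻ y, ENNReal.ofReal (h y) ∂ (kIter Q m x') :=
          lintegral_smul_measure _ _
  have hfin : ENNReal.ofReal K * ∫⁻ y, ENNReal.ofReal (h y) ∂ (kIter Q m x') ≠ ⊤ :=
    ENNReal.mul_ne_top ENNReal.ofReal_ne_top
      (ne_top_of_le_ne_top ENNReal.ofReal_ne_top (phiI_lint_le Q hhR hR m x'))
  have := ENNReal.toReal_mono hfin h1
  rwa [ENNReal.toReal_mul, ENNReal.toReal_ofReal (le_trans zero_le_one hK1)] at this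

include hf hB hB0 hm hK1 hME in
lemma harnack : ∀ (q : ℕ) (y x : E),
    (Sop Q f α)^[q] (fun _ => 1) y ≤ (K * Real.exp (2*(m:ℝ)*B)) * (Sop Q f α)^[q] (fun _ => 1) x := by
  have h1m : Measurable (fun _ : E => (1:ℝ)) := measurable_const
  intro q y x
  obtain ⟨hvqm, hvqb⟩ := sop_iter_meas_bounds Q hf hB h1m zero_le_one
    (fun _ => le_rfl) (fun _ => le_rfl) q
  have hvql : ∀ z, Real.exp (-((q:ℝ)*B)) ≤ (Sop Q f α)^[q] (fun _ => 1) z := by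
    intro z; simpa using (hvqb z).1
  have hvqu : ∀ z, (Sop Q f α)^[q] (fun _ => 1) z ≤ Real.exp ((q:ℝ)*B) := by
    intro z; simpa using (hvqb z).2
  rcases lt_or_ge q m with hq | hq
  · -- small q : crude bound
    have h1 : (Sop Q f α)^[q] (fun _ => 1) y ≤ Real.exp ((q:ℝ)*B) := hvqu y
    have h2 : Real.exp (-((q:ℝ)*B)) ≤ (Sop Q f α)^[q] (fun _ => 1) x := hvql x
    have hqB : (q:ℝ)*B ≤ (m:ℝ)*B := by
      have : (q:ℝ) ≤ (m:ℝ) := by exact_mod_cast hq.le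
      nlinarith
    calc (Sop Q f α)^[q] (fun _ => 1) y ≤ Real.exp ((q:ℝ)*B) := h1
      _ = Real.exp (2*(q:ℝ)*B) * Real.exp (-((q:ℝ)*B)) := by
          rw [← Real.exp_add]; ring_nf
      _ ≤ (K * Real.exp (2*(m:ℝ)*B)) * (Sop Q f α)^[q] (fun _ => 1) x := by
          have e1 : Real.exp (2*(q:ℝ)*B) ≤ K * Real.exp (2*(m:ℝ)*B) := by
            calc Real.exp (2*(q:ℝ)*B) ≤ Real.exp (2*(m:ℝ)*B) := by
                  apply Real.exp_le_exp.mpr; nlinarith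
              _ ≤ K * Real.exp (2*(m:ℝ)*B) := by nlinarith [Real.exp_pos (2*(m:ℝ)*B)]
          exact mul_le_mul e1 h2 (Real.exp_nonneg _)
            (le_trans (by positivity) e1)
  · -- large q : use (ME)
    obtain ⟨p, rfl⟩ : ∃ p, q = m + p := ⟨q - m, by omega⟩
    have hiter : ∀ z, (Sop Q f α)^[m + p] (fun _ => 1) z
        = (Sop Q f α)^[m] ((Sop Q f α)^[p] (fun _ => 1)) z := by
      intro z; rw [Function.iterate_add_apply]
    set h' := (Sop Q f α)^[p] (fun _ => 1) with hh'
    obtain ⟨hh'm, hh'b⟩ := sop_iter_meas_bounds Q hf hB h1m zero_le_one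
      (fun _ => le_rfl) (fun _ => le_rfl) p
    have hh'l : ∀ z, 0 ≤ h' z := fun z =>
      le_trans (by positivity : (0:ℝ) ≤ Real.exp (-((p:ℝ)*B))) (by simpa using (hh'b z).1)
    have hh'u : ∀ z, h' z ≤ Real.exp ((p:ℝ)*B) := fun z => by simpa using (hh'b z).2
    have hRp : (0:ℝ) ≤ Real.exp ((p:ℝ)*B) := Real.exp_nonneg _
    have hs := sop_iter_sandwich Q hf hB hh'm hh'l hh'u hRp m
    have hME' := phiI_ME Q hK1 hME hh'm hh'u hRp y x
    have lower_x : Real.exp (-((m:ℝ)*B)) * phiI Q h' m x ≤ (Sop Q f α)^[m] h' x := (hs x).1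
    have upper_y : (Sop Q f α)^[m] h' y ≤ Real.exp ((m:ℝ)*B) * phiI Q h' m y := (hs y).2
    have phix : phiI Q h' m x ≤ Real.exp ((m:ℝ)*B) * (Sop Q f α)^[m] h' x := by
      have := mul_le_mul_of_nonneg_left lower_x (Real.exp_nonneg ((m:ℝ)*B))
      rw [← mul_assoc, ← Real.exp_add] at this
      simpa using this
    calc (Sop Q f α)^[m + p] (fun _ => 1) y = (Sop Q f α)^[m] h' y := hiter y
      _ ≤ Real.exp ((m:ℝ)*B) * phiI Q h' m y := upper_y
      _ ≤ Real.exp ((m:ℝ)*B) * (K * phiI Q h' m x) :=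
          mul_le_mul_of_nonneg_left hME' (Real.exp_nonneg _)
      _ ≤ Real.exp ((m:ℝ)*B) * (K * (Real.exp ((m:ℝ)*B) * (Sop Q f α)^[m] h' x)) := by
          have hK0 : (0:ℝ) ≤ K := le_trans zero_le_one hK1
          exact mul_le_mul_of_nonneg_left (mul_le_mul_of_nonneg_left phix hK0)
            (Real.exp_nonneg _)
      _ = (K * Real.exp (2*(m:ℝ)*B)) * (Sop Q f α)^[m + p] (fun _ => 1) x := by
          rw [hiter x,
            show Real.exp (2*(m:ℝ)*B) = Real.exp ((m:ℝ)*B) * Real.exp ((m:ℝ)*B) by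
              rw [← Real.exp_add]; ring_nf]
          ring

end key

section fekete
variable {E : Type*} [MeasurableSpace E] (Q : Kernel E E) [IsMarkovKernel Q]
  {f : E → ℝ} (hf : Measurable f) {α B : ℝ} (hB : ∀ x, |α * f x| ≤ B) (hB0 : 0 ≤ B)
  {m : ℕ} (hm : 1 ≤ m) {K : ℝ} (hK1 : 1 ≤ K)
  (hME : ∀ x x' : E, ∀ Bs : Set E, MeasurableSet Bs →
    kIter Q m x Bs ≤ ENNReal.ofReal K * kIter Q m x' Bs)

include hf hB hB0 hm hK1 hME in
lemma submult : ∀ (p q : ℕ) (x : E),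
    (Sop Q f α)^[p+q] (fun _ => 1) x
      ≤ (K * Real.exp (2*(m:ℝ)*B)) * (Sop Q f α)^[p] (fun _ => 1) x
        * (Sop Q f α)^[q] (fun _ => 1) x ∧
    (Sop Q f α)^[p] (fun _ => 1) x * (Sop Q f α)^[q] (fun _ => 1) x
      ≤ (K * Real.exp (2*(m:ℝ)*B)) * (Sop Q f α)^[p+q] (fun _ => 1) x := by
  intro p q x
  set M := K * Real.exp (2*(m:ℝ)*B) with hM
  have hM1 : (1:ℝ) ≤ M := by
    have h2 : (1:ℝ) ≤ Real.exp (2*(m:ℝ)*B) := by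
      apply Real.one_le_exp; positivity
    nlinarith
  have hM0 : (0:ℝ) < M := lt_of_lt_of_le zero_lt_one hM1
  have h1m : Measurable (fun _ : E => (1:ℝ)) := measurable_const
  obtain ⟨hvqm, hvqb⟩ := sop_iter_meas_bounds Q hf hB h1m zero_le_one
    (fun _ => le_rfl) (fun _ => le_rfl) q
  have hvql : ∀ z, 0 ≤ (Sop Q f α)^[q] (fun _ => 1) z := fun z =>
    le_trans (by positivity : (0:ℝ) ≤ Real.exp (-((q:ℝ)*B)) * 1) (hvqb z).1
  have hvqu : ∀ z, (Sop Q f α)^[q] (fun _ => 1) z ≤ Real.exp ((q:ℝ)*B) := fun z => by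
    simpa using (hvqb z).2
  have hiter : (Sop Q f α)^[p+q] (fun _ => 1) x
      = (Sop Q f α)^[p] ((Sop Q f α)^[q] (fun _ => 1)) x := by
    rw [Function.iterate_add_apply]
  have hhar := harnack Q hf hB hB0 hm hK1 hME q
  constructor
  · -- upper bound
    set c := M * (Sop Q f α)^[q] (fun _ => 1) x with hc
    have hc0 : 0 ≤ c := mul_nonneg hM0.le (hvql x)
    have hmono := sop_iter_mono Q hf hB hvqm (h1m.const_mul c)
      hvql hvqu (fun _ => by simpa using hc0) (fun _ => le_rfl)
      (fun y => by simpa [hc] using hhar y x) p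
    have hconst := sop_iter_const_mul Q (f := f) (α := α) c (fun _ => (1:ℝ)) p
    have h2 := hmono x
    rw [show (fun y : E => c * (fun _ : E => (1:ℝ)) y) = (fun _ : E => c * 1) from rfl,
      hconst] at h2
    rw [hiter]
    calc (Sop Q f α)^[p] ((Sop Q f α)^[q] (fun _ => 1)) x
        ≤ c * (Sop Q f α)^[p] (fun _ => 1) x := h2
      _ = M * (Sop Q f α)^[p] (fun _ => 1) x * (Sop Q f α)^[q] (fun _ => 1) x := by
          rw [hc]; ring
  · -- lower bound
    set c := (Sop Q f α)^[q] (fun _ => 1) x / M with hc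
    have hc0 : 0 ≤ c := div_nonneg (hvql x) hM0.le
    have hcle : ∀ y, c ≤ (Sop Q f α)^[q] (fun _ => 1) y := by
      intro y
      rw [hc, div_le_iff₀ hM0]
      calc (Sop Q f α)^[q] (fun _ => 1) x ≤ M * (Sop Q f α)^[q] (fun _ => 1) y := hhar x y
        _ = (Sop Q f α)^[q] (fun _ => 1) y * M := by ring
    have hmono := sop_iter_mono Q hf hB (h1m.const_mul c) hvqm
      (fun _ => by positivity) (fun _ => by simpa using hcle x |>.trans (hvqu x))
      hvql hvqu (fun y => by simpa using hcle y) p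
    have hconst := sop_iter_const_mul Q (f := f) (α := α) c (fun _ => (1:ℝ)) p
    have h2 := hmono x
    rw [show (fun y : E => c * (fun _ : E => (1:ℝ)) y) = (fun _ : E => c * 1) from rfl,
      hconst] at h2
    rw [hiter]
    have h3 : c * (Sop Q f α)^[p] (fun _ => 1) x
        ≤ (Sop Q f α)^[p] ((Sop Q f α)^[q] (fun _ => 1)) x := h2
    rw [hc] at h3
    have := mul_le_mul_of_nonneg_left h3 hM0.le
    calc (Sop Q f α)^[p] (fun _ => 1) x * (Sop Q f α)^[q] (fun _ => 1) x
        = M * ((Sop Q f α)^[q] (fun _ => 1) x / M * (Sop Q f α)^[p] (fun _ => 1) x) := by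
          field_simp
      _ ≤ M * (Sop Q f α)^[p] ((Sop Q f α)^[q] (fun _ => 1)) x := this

end fekete

section irsbounds
variable {E : Type*} [MeasurableSpace E] (Q : Kernel E E) [IsMarkovKernel Q]
  {f : E → ℝ} (hf : Measurable f) {α B : ℝ} (hB : ∀ x, |α * f x| ≤ B) (hB0 : 0 ≤ B)
  {m : ℕ} (hm : 1 ≤ m) {K : ℝ} (hK1 : 1 ≤ K)
  (hME : ∀ x x' : E, ∀ Bs : Set E, MeasurableSet Bs →
    kIter Q m x Bs ≤ ENNReal.ofReal K * kIter Q m x' Bs)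

set_option maxHeartbeats 1000000 in
include hf hB hB0 hm hK1 hME in
lemma IRS_bounds (x : E) {n0 : ℕ} (hn0 : 1 ≤ n0) :
    (Real.log ((Sop Q f α)^[n0] (fun _ => 1) x) - Real.log (K * Real.exp (2*(m:ℝ)*B))) / n0
      ≤ IRS Q f α x ∧
    IRS Q f α x ≤
      (Real.log ((Sop Q f α)^[n0] (fun _ => 1) x) + Real.log (K * Real.exp (2*(m:ℝ)*B))) / n0 := by
  have hM1 : (1:ℝ) ≤ K * Real.exp (2*(m:ℝ)*B) := by
    have h2 : (1:ℝ) ≤ Real.exp (2*(m:ℝ)*B) := by apply Real.one_le_exp; positivity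
    nlinarith
  have hM0 : (0:ℝ) < K * Real.exp (2*(m:ℝ)*B) := lt_of_lt_of_le zero_lt_one hM1
  set L := Real.log (K * Real.exp (2*(m:ℝ)*B)) with hLdef
  have hL0 : 0 ≤ L := Real.log_nonneg hM1
  have h1m : Measurable (fun _ : E => (1:ℝ)) := measurable_const
  set v : ℕ → ℝ := fun n => (Sop Q f α)^[n] (fun _ => 1) x with hvdef
  have hvb : ∀ n : ℕ, Real.exp (-((n:ℝ)*B)) ≤ v n ∧ v n ≤ Real.exp ((n:ℝ)*B) := by
    intro n
    obtain ⟨_, hb⟩ := sop_iter_meas_bounds Q hf hB h1m zero_le_one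
      (fun _ => le_rfl) (fun _ => le_rfl) n
    exact ⟨by simpa using (hb x).1, by simpa using (hb x).2⟩
  have hvpos : ∀ n, 0 < v n := fun n => lt_of_lt_of_le (Real.exp_pos _) (hvb n).1
  set a : ℕ → ℝ := fun n => Real.log (v n) with hadef
  have ha0 : a 0 = 0 := by simp [hadef, hvdef]
  have habs : ∀ n : ℕ, -((n:ℝ)*B) ≤ a n ∧ a n ≤ (n:ℝ)*B := by
    intro n
    constructor
    · have := (Real.log_le_log_iff (Real.exp_pos _) (hvpos n)).mpr (hvb n).1
      rwa [Real.log_exp] at this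
    · have := (Real.log_le_log_iff (hvpos n) (Real.exp_pos _)).mpr (hvb n).2
      rwa [Real.log_exp] at this
  have hsub : ∀ p q : ℕ, a (p+q) ≤ a p + a q + L ∧ a p + a q - L ≤ a (p+q) := by
    intro p q
    obtain ⟨h1, h2⟩ := submult Q hf hB hB0 hm hK1 hME p q x
    have hlog1 : Real.log ((K * Real.exp (2*(m:ℝ)*B)) * v p * v q) = L + a p + a q := by
      rw [Real.log_mul (ne_of_gt (mul_pos hM0 (hvpos p))) (ne_of_gt (hvpos q)),
        Real.log_mul (ne_of_gt hM0) (ne_of_gt (hvpos p))]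
    have hlog2 : Real.log ((K * Real.exp (2*(m:ℝ)*B)) * v (p+q)) = L + a (p+q) := by
      rw [Real.log_mul (ne_of_gt hM0) (ne_of_gt (hvpos (p+q)))]
    constructor
    · have := (Real.log_le_log_iff (hvpos (p+q))
        (mul_pos (mul_pos hM0 (hvpos p)) (hvpos q))).mpr h1
      rw [hlog1] at this; linarith
    · have hpq : 0 < v p * v q := mul_pos (hvpos p) (hvpos q)
      have := (Real.log_le_log_iff hpq (mul_pos hM0 (hvpos (p+q)))).mpr h2
      rw [hlog2, Real.log_mul (ne_of_gt (hvpos p)) (ne_of_gt (hvpos q))] at this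
      linarith
  -- iterated sub/superadditivity along multiples of n0
  have hmultU : ∀ k : ℕ, a (n0*k) ≤ (k:ℝ) * (a n0 + L) := by
    intro k
    induction k with
    | zero => simp [ha0]
    | succ k ih =>
      have h1 := (hsub (n0*k) n0).1
      rw [← Nat.mul_succ] at h1
      push_cast
      push_cast at ih
      nlinarith
  have hmultL : ∀ k : ℕ, (k:ℝ) * (a n0 - L) ≤ a (n0*k) := by
    intro k
    induction k with
    | zero => simp [ha0]
    | succ k ih =>
      have h1 := (hsub (n0*k) n0).2
      rw [← Nat.mul_succ] at h1
      push_cast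
      push_cast at ih
      nlinarith
  set t := (a n0 + L) / n0 with htdef
  set s := (a n0 - L) / n0 with hsdef
  have hn0R : (0:ℝ) < (n0:ℝ) := by exact_mod_cast hn0
  -- linear growth bounds for a n
  have hAu : ∀ n : ℕ, 1 ≤ n → a n ≤ (n:ℝ)*t + ((n0:ℝ)*|t| + (n0:ℝ)*B + L) := by
    intro n hn
    obtain ⟨k, r, hdm, hr⟩ : ∃ k r, n0 * k + r = n ∧ r < n0 :=
      ⟨n / n0, n % n0, Nat.div_add_mod n n0, Nat.mod_lt n (by omega)⟩
    have h1 : a n ≤ a (n0*k) + a r + L := by rw [← hdm]; exact (hsub (n0*k) r).1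
    have h2 : a (n0*k) ≤ ((n0*k : ℕ):ℝ) * t := by
      have := hmultU k
      have ht' : ((n0*k : ℕ):ℝ) * t = (k:ℝ) * (a n0 + L) := by
        push_cast; rw [htdef, mul_comm (n0:ℝ) (k:ℝ), mul_assoc, ← mul_div_assoc, mul_div_cancel_left₀ _ hn0R.ne']
      rw [ht']; exact this
    have hnr : (n:ℝ) = ((n0*k:ℕ):ℝ) + (r:ℝ) := by exact_mod_cast hdm.symm
    have h3 : ((n0*k : ℕ):ℝ) * t ≤ (n:ℝ)*t + (n0:ℝ)*|t| := by
      have hr0 : (0:ℝ) ≤ (r:ℝ) := by positivity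
      have hrn : (r:ℝ) ≤ (n0:ℝ) := by exact_mod_cast hr.le
      nlinarith [le_abs_self t, neg_abs_le t, abs_nonneg t]
    have h4 : a r ≤ (n0:ℝ)*B := by
      have := (habs r).2
      have hrn : (r:ℝ) ≤ (n0:ℝ) := by exact_mod_cast hr.le
      nlinarith
    linarith
  have hAl : ∀ n : ℕ, 1 ≤ n → (n:ℝ)*s - ((n0:ℝ)*|s| + (n0:ℝ)*B + L) ≤ a n := by
    intro n hn
    obtain ⟨k, r, hdm, hr⟩ : ∃ k r, n0 * k + r = n ∧ r < n0 :=
      ⟨n / n0, n % n0, Nat.div_add_mod n n0, Nat.mod_lt n (by omega)⟩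
    have h1 : a (n0*k) + a r - L ≤ a n := by rw [← hdm]; exact (hsub (n0*k) r).2
    have h2 : ((n0*k : ℕ):ℝ) * s ≤ a (n0*k) := by
      have := hmultL k
      have hs' : ((n0*k : ℕ):ℝ) * s = (k:ℝ) * (a n0 - L) := by
        push_cast; rw [hsdef, mul_comm (n0:ℝ) (k:ℝ), mul_assoc, ← mul_div_assoc, mul_div_cancel_left₀ _ hn0R.ne']
      rw [hs']; exact this
    have hnr : (n:ℝ) = ((n0*k:ℕ):ℝ) + (r:ℝ) := by exact_mod_cast hdm.symm
    have h3 : (n:ℝ)*s - (n0:ℝ)*|s| ≤ ((n0*k : ℕ):ℝ) * s := by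
      have hr0 : (0:ℝ) ≤ (r:ℝ) := by positivity
      have hrn : (r:ℝ) ≤ (n0:ℝ) := by exact_mod_cast hr.le
      nlinarith [le_abs_self s, neg_abs_le s, abs_nonneg s]
    have h4 : -((n0:ℝ)*B) ≤ a r := by
      have := (habs r).1
      have hrn : (r:ℝ) ≤ (n0:ℝ) := by exact_mod_cast hr.le
      nlinarith
    linarith
  -- the sequence in the liminf
  set u : ℕ → ℝ := fun n => (1/(n:ℝ)) * Real.log ((Sop Q f α)^[n] (fun _ => 1) x) with hudef
  have hua : ∀ n, u n = (1/(n:ℝ)) * a n := fun n => rfl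
  have hIRS : IRS Q f α x = liminf u atTop := rfl
  have huB : ∀ n, -B ≤ u n ∧ u n ≤ B := by
    intro n
    rcases Nat.eq_zero_or_pos n with h0 | hpos
    · subst h0
      rw [hua]
      simp only [Nat.cast_zero, ha0, one_div, mul_zero]
      constructor <;> [linarith; exact hB0]
    · have hnR : (0:ℝ) < (n:ℝ) := by exact_mod_cast hpos
      obtain ⟨hl, hu2⟩ := habs n
      have hinv : (0:ℝ) ≤ 1/(n:ℝ) := le_of_lt (one_div_pos.mpr hnR)
      constructor
      · calc (-B : ℝ) = (1/(n:ℝ)) * (-((n:ℝ)*B)) := by field_simp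
          _ ≤ (1/(n:ℝ)) * a n := mul_le_mul_of_nonneg_left hl hinv
          _ = u n := (hua n).symm
      · calc u n = (1/(n:ℝ)) * a n := hua n
          _ ≤ (1/(n:ℝ)) * ((n:ℝ)*B) := mul_le_mul_of_nonneg_left hu2 hinv
          _ = B := by field_simp
  have hbddBelow : IsBoundedUnder (· ≥ ·) atTop u :=
    isBoundedUnder_of ⟨-B, fun n => (huB n).1⟩
  have hbddAbove : IsBoundedUnder (· ≤ ·) atTop u :=
    isBoundedUnder_of ⟨B, fun n => (huB n).2⟩
  have hcobdd : IsCoboundedUnder (· ≥ ·) atTop u := hbddAbove.isCoboundedUnder_ge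
  constructor
  · -- lower bound for the liminf
    set w' : ℕ → ℝ := fun n => s - ((n0:ℝ)*|s| + (n0:ℝ)*B + L)/n with hw'def
    have hw't : Tendsto w' atTop (nhds s) := by
      have := Tendsto.const_sub s (tendsto_const_div_atTop_nhds_zero_nat
        ((n0:ℝ)*|s| + (n0:ℝ)*B + L))
      simpa using this
    have hev : ∀ᶠ n in atTop, w' n ≤ u n := by
      refine eventually_atTop.mpr ⟨1, fun n hn => ?_⟩
      have hnR : (0:ℝ) < (n:ℝ) := by exact_mod_cast hn
      have hinv : (0:ℝ) ≤ 1/(n:ℝ) := le_of_lt (one_div_pos.mpr hnR)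
      have hA := hAl n hn
      calc w' n = (1/(n:ℝ)) * ((n:ℝ)*s - ((n0:ℝ)*|s| + (n0:ℝ)*B + L)) := by
            rw [hw'def]
            have hne : (n:ℝ) ≠ 0 := ne_of_gt hnR
            field_simp
        _ ≤ (1/(n:ℝ)) * a n := mul_le_mul_of_nonneg_left hA hinv
        _ = u n := (hua n).symm
    have h5 : liminf w' atTop ≤ liminf u atTop :=
      liminf_le_liminf hev hw't.isBoundedUnder_ge hcobdd
    rw [hw't.liminf_eq] at h5
    exact h5
  · -- upper bound for the liminf
    set w : ℕ → ℝ := fun n => t + ((n0:ℝ)*|t| + (n0:ℝ)*B + L)/n with hwdef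
    have hwt : Tendsto w atTop (nhds t) := by
      have := Tendsto.const_add t (tendsto_const_div_atTop_nhds_zero_nat
        ((n0:ℝ)*|t| + (n0:ℝ)*B + L))
      simpa using this
    have hev : ∀ᶠ n in atTop, u n ≤ w n := by
      refine eventually_atTop.mpr ⟨1, fun n hn => ?_⟩
      have hnR : (0:ℝ) < (n:ℝ) := by exact_mod_cast hn
      have hinv : (0:ℝ) ≤ 1/(n:ℝ) := le_of_lt (one_div_pos.mpr hnR)
      have hA := hAu n hn
      calc u n = (1/(n:ℝ)) * a n := hua n
        _ ≤ (1/(n:ℝ)) * ((n:ℝ)*t + ((n0:ℝ)*|t| + (n0:ℝ)*B + L)) :=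
            mul_le_mul_of_nonneg_left hA hinv
        _ = w n := by
            rw [hwdef]
            have hne : (n:ℝ) ≠ 0 := ne_of_gt hnR
            field_simp
    have h5 : liminf u atTop ≤ liminf w atTop :=
      liminf_le_liminf hev hbddBelow hwt.isCoboundedUnder_ge
    rw [hwt.liminf_eq] at h5
    exact h5

end irsbounds

section finhor
variable {E : Type*} [MeasurableSpace E]

lemma fin_horizon (Qk : ℕ → Kernel E E) (Q : Kernel E E) [hQk : ∀ k, IsMarkovKernel (Qk k)]
    [IsMarkovKernel Q]
    (fk : ℕ → E → ℝ) (f : E → ℝ) (hfk : ∀ k, Measurable (fk k)) (hf : Measurable f)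
    {α B : ℝ} (hBk : ∀ k x, |α * fk k x| ≤ B) (hB : ∀ x, |α * f x| ≤ B)
    (hfconv : ∀ x, Tendsto (fun k => α * fk k x) atTop (nhds (α * f x)))
    (htv : ∀ x, Tendsto (fun k => tvDist (Qk k x) (Q x)) atTop (nhds 0)) :
    ∀ (n : ℕ) (x : E), Tendsto (fun k => (Sop (Qk k) (fk k) α)^[n] (fun _ => 1) x) atTop
      (nhds ((Sop Q f α)^[n] (fun _ => 1) x)) := by
  have h1m : Measurable (fun _ : E => (1:ℝ)) := measurable_const
  intro n
  induction n with
  | zero => intro x; simpa using tendsto_const_nhds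
  | succ n IH =>
    intro x
    simp only [Function.iterate_succ_apply']
    set R : ℝ := Real.exp ((n:ℝ)*B) with hRdef
    have hR : 0 < R := Real.exp_pos _
    -- properties of the iterates
    obtain ⟨hgm, hgb⟩ := sop_iter_meas_bounds Q hf hB h1m zero_le_one
      (fun _ => le_rfl) (fun _ => le_rfl) n
    set g : E → ℝ := (Sop Q f α)^[n] (fun _ => 1) with hgdef
    have hgl : ∀ y, 0 ≤ g y := fun y =>
      le_trans (by positivity : (0:ℝ) ≤ Real.exp (-((n:ℝ)*B)) * 1) (hgb y).1
    have hgu : ∀ y, g y ≤ R := fun y => by simpa [hRdef] using (hgb y).2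
    have hgk : ∀ k, Measurable ((Sop (Qk k) (fk k) α)^[n] (fun _ => 1))
        ∧ ∀ y, 0 ≤ (Sop (Qk k) (fk k) α)^[n] (fun _ => 1) y
        ∧ (Sop (Qk k) (fk k) α)^[n] (fun _ => 1) y ≤ R := by
      intro k
      obtain ⟨h1, h2⟩ := sop_iter_meas_bounds (Qk k) (hfk k) (hBk k) h1m zero_le_one
        (fun _ => le_rfl) (fun _ => le_rfl) n
      exact ⟨h1, fun y => ⟨le_trans (by positivity : (0:ℝ) ≤ Real.exp (-((n:ℝ)*B)) * 1)
        (h2 y).1, by simpa [hRdef] using (h2 y).2⟩⟩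
    set gk : ℕ → E → ℝ := fun k => (Sop (Qk k) (fk k) α)^[n] (fun _ => 1) with hgkdef
    -- convergence of the integrals
    have hIconv : Tendsto (fun k => ∫ y, gk k y ∂ (Qk k x)) atTop
        (nhds (∫ y, g y ∂ (Q x))) := by
      have hJ : Tendsto (fun k => ∫ y, |gk k y - g y| ∂ (Q x)) atTop (nhds 0) := by
        have := tendsto_integral_of_dominated_convergence (μ := Q x)
          (F := fun k y => |gk k y - g y|) (f := fun _ => (0:ℝ)) (bound := fun _ => 2*R)
          (fun k => (((hgk k).1.sub hgm).abs).aestronglyMeasurable)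
          (integrable_const _)
          (fun k => Eventually.of_forall fun y => by
            have h1 := (hgk k).2 y
            have h2 := hgl y
            have h3 := hgu y
            rw [Real.norm_eq_abs, abs_abs]
            show |gk k y - g y| ≤ 2*R
            rw [abs_le]
            constructor <;> [linarith [h1.2, h1.1]; linarith [h1.2, h1.1]])
          (Eventually.of_forall fun y => by
            have := ((IH y).sub_const (g y)).abs
            simpa using this)
        simpa using this
      have hb : ∀ k, |(∫ y, gk k y ∂ (Qk k x)) - ∫ y, g y ∂ (Q x)|
          ≤ (∫ y, |gk k y - g y| ∂ (Q x)) + 2*(2*R)*tvDist (Qk k x) (Q x)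
            + 2*R*tvDist (Qk k x) (Q x) := by
        intro k
        have htv0 : 0 ≤ tvDist (Qk k x) (Q x) := tvDist_nonneg _ _
        have hDle : ∀ Bs : Set E, MeasurableSet Bs →
            |((Qk k x) Bs).toReal - ((Q x) Bs).toReal| ≤ tvDist (Qk k x) (Q x) :=
          fun Bs hBs => abs_measure_sub_le_tvDist _ _ hBs
        have hint_gk : Integrable (gk k) (Qk k x) := integrable_of_bdd (hgk k).1
          (R := R) fun y => abs_le.mpr ⟨by linarith [((hgk k).2 y).1], ((hgk k).2 y).2⟩
        have hint_g_k : Integrable g (Qk k x) := integrable_of_bdd hgm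
          (R := R) fun y => abs_le.mpr ⟨by linarith [hgl y], hgu y⟩
        have hint_g : Integrable g (Q x) := integrable_of_bdd hgm
          (R := R) fun y => abs_le.mpr ⟨by linarith [hgl y], hgu y⟩
        have t2 : |(∫ y, g y ∂ (Qk k x)) - ∫ y, g y ∂ (Q x)|
            ≤ 2*R*tvDist (Qk k x) (Q x) :=
          abs_integral_sub_le_tv _ _ hgm hR
            (fun y => abs_le.mpr ⟨by linarith [hgl y], hgu y⟩) htv0 hDle
        have habsm : Measurable fun y => |gk k y - g y| := ((hgk k).1.sub hgm).abs
        have habsb : ∀ y, |(|gk k y - g y|)| ≤ 2*R := by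
          intro y
          rw [abs_abs, abs_le]
          have h1 := (hgk k).2 y
          constructor <;> [linarith [h1.2, hgl y, hgu y]; linarith [h1.1, hgl y, hgu y]]
        have t1a : |(∫ y, |gk k y - g y| ∂ (Qk k x)) - ∫ y, |gk k y - g y| ∂ (Q x)|
            ≤ 2*(2*R)*tvDist (Qk k x) (Q x) :=
          abs_integral_sub_le_tv _ _ habsm (by linarith) habsb htv0 hDle
        have t1b : |(∫ y, gk k y ∂ (Qk k x)) - ∫ y, g y ∂ (Qk k x)|
            ≤ ∫ y, |gk k y - g y| ∂ (Qk k x) := by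
          rw [← integral_sub hint_gk hint_g_k]
          calc |∫ y, (gk k y - g y) ∂ (Qk k x)|
              = ‖∫ y, (gk k y - g y) ∂ (Qk k x)‖ := (Real.norm_eq_abs _).symm
            _ ≤ ∫ y, ‖gk k y - g y‖ ∂ (Qk k x) := norm_integral_le_integral_norm _
            _ = ∫ y, |gk k y - g y| ∂ (Qk k x) := by simp [Real.norm_eq_abs]
        have t1c : ∫ y, |gk k y - g y| ∂ (Qk k x)
            ≤ (∫ y, |gk k y - g y| ∂ (Q x)) + 2*(2*R)*tvDist (Qk k x) (Q x) := by
          have := (abs_le.mp t1a).2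
          linarith
        calc |(∫ y, gk k y ∂ (Qk k x)) - ∫ y, g y ∂ (Q x)|
            ≤ |(∫ y, gk k y ∂ (Qk k x)) - ∫ y, g y ∂ (Qk k x)|
              + |(∫ y, g y ∂ (Qk k x)) - ∫ y, g y ∂ (Q x)| := abs_sub_le _ _ _
          _ ≤ ((∫ y, |gk k y - g y| ∂ (Q x)) + 2*(2*R)*tvDist (Qk k x) (Q x))
              + 2*R*tvDist (Qk k x) (Q x) := by
              have := le_trans t1b t1c
              linarith
      have hbt : Tendsto (fun k => (∫ y, |gk k y - g y| ∂ (Q x))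
          + 2*(2*R)*tvDist (Qk k x) (Q x) + 2*R*tvDist (Qk k x) (Q x)) atTop (nhds 0) := by
        have h2 : Tendsto (fun k => 2*(2*R)*tvDist (Qk k x) (Q x)) atTop (nhds 0) := by
          have := (htv x).const_mul (2*(2*R))
          simpa using this
        have h3 : Tendsto (fun k => 2*R*tvDist (Qk k x) (Q x)) atTop (nhds 0) := by
          have := (htv x).const_mul (2*R)
          simpa using this
        have := (hJ.add h2).add h3
        simpa using this
      rw [tendsto_iff_dist_tendsto_zero]
      refine squeeze_zero (fun k => dist_nonneg) (fun k => ?_) hbt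
      rw [Real.dist_eq]
      exact hb k
    -- convergence of the exponential factor
    have hexp : Tendsto (fun k => Real.exp (α * fk k x)) atTop (nhds (Real.exp (α * f x))) :=
      (Real.continuous_exp.tendsto _).comp (hfconv x)
    have := hexp.mul hIconv
    simpa only [Sop] using this

end finhor

/-- Theorem 3, second claim: under (UE), (ME) and total variation
convergence of the controlled kernels along `u_n → u`, the long run risk-sensitive
functionals converge: `I_x^α(u_n) → I_x^α(u)`. -/
theorem stmt12 {E U : Type*} [TopologicalSpace E] [PolishSpace E]
    [MeasurableSpace E] [BorelSpace E]
    [MetricSpace U] [CompactSpace U] [MeasurableSpace U] [BorelSpace U]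
    (P : Kernel (E × U) E) [IsMarkovKernel P]
    -- (UE)
    (Δ : ℝ) (hΔ : Δ < 1)
    (hUE : ∀ (x x' : E) (a a' : U) (B : Set E), MeasurableSet B →
      (P (x, a) B).toReal - (P (x', a') B).toReal ≤ Δ)
    -- (ME)
    (m : ℕ) (hm : 1 ≤ m) (K : ℝ)
    (hME : ∀ (u : E → U) (hu : Measurable u), ∀ x x' : E, ∀ B : Set E, MeasurableSet B →
      kIter (Qctrl P u hu) m x B ≤ ENNReal.ofReal K * kIter (Qctrl P u hu) m x' B)
    -- the cost function
    (c : E × U → ℝ) (hc : Measurable c) (C : ℝ) (hcb : ∀ p, |c p| ≤ C)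
    (hccont : ∀ y : E, Continuous (fun a : U => c (y, a)))
    (un : ℕ → E → U) (u : E → U)
    (hun : ∀ n, Measurable (un n)) (hu : Measurable u)
    (hconv : ∀ x, Tendsto (fun n => un n x) atTop (nhds (u x)))
    (htv : ∀ x, Tendsto
      (fun n => tvDist (Qctrl P (un n) (hun n) x) (Qctrl P u hu x)) atTop (nhds 0)) :
    ∀ α : ℝ, α ≠ 0 → ∀ x : E,
      Tendsto (fun n =>
          IRS (Qctrl P (un n) (hun n)) (fun y => c (y, un n y)) α x)
        atTop (nhds (IRS (Qctrl P u hu) (fun y => c (y, u y)) α x)) := by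
  intro α hα x
  -- Markov kernel instances
  haveI hQu : IsMarkovKernel (Qctrl P u hu) := by
    unfold Qctrl; infer_instance
  haveI hQun : ∀ k, IsMarkovKernel (Qctrl P (un k) (hun k)) := fun k => by
    unfold Qctrl; infer_instance
  -- the cost functions along the controls
  set f : E → ℝ := fun y => c (y, u y) with hfdef
  set fn : ℕ → E → ℝ := fun k y => c (y, un k y) with hfndef
  have hfm : Measurable f := hc.comp (measurable_id.prodMk hu)
  have hfnm : ∀ k, Measurable (fn k) := fun k => hc.comp (measurable_id.prodMk (hun k))
  -- the uniform bound
  have hC0 : 0 ≤ C := le_trans (abs_nonneg _) (hcb (x, u x))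
  set B : ℝ := |α| * C with hBdef
  have hB0 : 0 ≤ B := mul_nonneg (abs_nonneg _) hC0
  have hBf : ∀ y, |α * f y| ≤ B := fun y => by
    rw [abs_mul]
    exact mul_le_mul_of_nonneg_left (hcb _) (abs_nonneg α)
  have hBfn : ∀ k y, |α * fn k y| ≤ B := fun k y => by
    rw [abs_mul]
    exact mul_le_mul_of_nonneg_left (hcb _) (abs_nonneg α)
  -- K ≥ 1
  have hK1 : (1:ℝ) ≤ K := by
    haveI := kIter_markov (Qctrl P u hu) m
    have h1 := hME u hu x x Set.univ MeasurableSet.univ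
    rw [measure_univ, mul_one] at h1
    exact_mod_cast (ENNReal.one_le_ofReal).mp h1
  -- convergence of costs
  have hfconv : ∀ y, Tendsto (fun k => α * fn k y) atTop (nhds (α * f y)) := by
    intro y
    have h1 : Tendsto (fun k => fn k y) atTop (nhds (f y)) :=
      ((hccont y).tendsto (u y)).comp (hconv y)
    exact h1.const_mul α
  -- finite-horizon convergence
  have hfin := fin_horizon (fun k => Qctrl P (un k) (hun k)) (Qctrl P u hu)
    fn f hfnm hfm hBfn hBf hfconv htv
  -- constants
  set L : ℝ := Real.log (K * Real.exp (2*(m:ℝ)*B)) with hLdef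
  have hM1 : (1:ℝ) ≤ K * Real.exp (2*(m:ℝ)*B) := by
    have h2 : (1:ℝ) ≤ Real.exp (2*(m:ℝ)*B) := by apply Real.one_le_exp; positivity
    nlinarith
  have hL0 : 0 ≤ L := Real.log_nonneg hM1
  rw [Metric.tendsto_atTop]
  intro ε hε
  -- choose the horizon n0
  obtain ⟨n0, hn0⟩ := exists_nat_gt (max 1 (4*L/ε))
  have hn01 : 1 ≤ n0 := by
    by_contra h
    push_neg at h
    interval_cases n0
    · simp at hn0
      linarith [le_max_left (1:ℝ) (4*L/ε), hn0.1]
  have hn0R : (0:ℝ) < (n0:ℝ) := by exact_mod_cast hn01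
  have h2L : 2*L < (ε/2) * n0 := by
    have h1 : 4*L/ε < (n0:ℝ) := lt_of_le_of_lt (le_max_right _ _) hn0
    have := (div_lt_iff₀ hε).mp h1
    linarith
  -- two-sided bounds on all the IRS values
  have hbounds_u := IRS_bounds (Qctrl P u hu) hfm hBf hB0 hm hK1
    (hME u hu) x hn01
  have hbounds_un : ∀ k,
      (Real.log ((Sop (Qctrl P (un k) (hun k)) (fn k) α)^[n0] (fun _ => 1) x)
        - Real.log (K * Real.exp (2*(m:ℝ)*B))) / n0
        ≤ IRS (Qctrl P (un k) (hun k)) (fn k) α x ∧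
      IRS (Qctrl P (un k) (hun k)) (fn k) α x ≤
      (Real.log ((Sop (Qctrl P (un k) (hun k)) (fn k) α)^[n0] (fun _ => 1) x)
        + Real.log (K * Real.exp (2*(m:ℝ)*B))) / n0 := fun k =>
    IRS_bounds (Qctrl P (un k) (hun k)) (hfnm k) (hBfn k) hB0 hm hK1
      (hME (un k) (hun k)) x hn01
  -- positivity of the limiting finite-horizon value
  have h1m : Measurable (fun _ : E => (1:ℝ)) := measurable_const
  obtain ⟨_, hvb⟩ := sop_iter_meas_bounds (Qctrl P u hu) hfm hBf h1m zero_le_one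
    (fun _ => le_rfl) (fun _ => le_rfl) n0
  have hvpos : 0 < (Sop (Qctrl P u hu) f α)^[n0] (fun _ => 1) x :=
    lt_of_lt_of_le (by positivity : (0:ℝ) < Real.exp (-((n0:ℝ)*B)) * 1) (hvb x).1
  -- convergence of the finite-horizon logarithms
  have hlog : Tendsto
      (fun k => Real.log ((Sop (Qctrl P (un k) (hun k)) (fn k) α)^[n0] (fun _ => 1) x))
      atTop (nhds (Real.log ((Sop (Qctrl P u hu) f α)^[n0] (fun _ => 1) x))) :=
    ((Real.continuousAt_log (ne_of_gt hvpos)).tendsto).comp (hfin n0 x)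
  obtain ⟨N, hN⟩ := Metric.tendsto_atTop.mp hlog ((ε/2) * n0) (by positivity)
  refine ⟨N, fun k hk => ?_⟩
  have hdist := hN k hk
  rw [Real.dist_eq] at hdist
  set ak := Real.log ((Sop (Qctrl P (un k) (hun k)) (fn k) α)^[n0] (fun _ => 1) x) with hak
  set aL := Real.log ((Sop (Qctrl P u hu) f α)^[n0] (fun _ => 1) x) with haL
  obtain ⟨hu1, hu2⟩ := hbounds_u
  obtain ⟨hk1, hk2⟩ := hbounds_un k
  have habs := abs_lt.mp hdist
  rw [Real.dist_eq]
  have hub : IRS (Qctrl P (un k) (hun k)) (fn k) α x - IRS (Qctrl P u hu) f α x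
      ≤ ((ak - aL) + 2*L) / n0 := by
    have : (ak + L)/n0 - (aL - L)/n0 = ((ak - aL) + 2*L)/n0 := by ring
    rw [← this]
    have := sub_le_sub hk2 hu1
    linarith
  have hlb : IRS (Qctrl P u hu) f α x - IRS (Qctrl P (un k) (hun k)) (fn k) α x
      ≤ ((aL - ak) + 2*L) / n0 := by
    have : (aL + L)/n0 - (ak - L)/n0 = ((aL - ak) + 2*L)/n0 := by ring
    rw [← this]
    have := sub_le_sub hu2 hk1
    linarith
  have hub2 : ((ak - aL) + 2*L) / n0 < ε := by
    rw [div_lt_iff₀ hn0R]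
    have : ak - aL < (ε/2) * n0 := habs.2
    nlinarith
  have hlb2 : ((aL - ak) + 2*L) / n0 < ε := by
    rw [div_lt_iff₀ hn0R]
    have : -( (ε/2) * n0) < ak - aL := habs.1
    nlinarith
  rw [abs_lt]
  constructor <;> linarith
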